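/- Let n ≥ 1 be an integer and let G be a graph. The graph semiring S_G satisfies the identity c_n ≈ x³ if and only if G contains no cycle whose length divides n. -/

import Mathlib

universe u

-- The underlying set of the graph semiring of a graph with vertex set `V`:
-- the vertices together with two extra elements `0` and `ω`.
inductive GS (V : Type u) : Type u where
  | zero : GS V
  | omega : GS V
  | vert : V → GS V

-- Multiplication of the graph semiring: `x·y = ω` if `x, y` are vertices joined by an
-- edge, and `x·y = 0` otherwise.
open Classical in
noncomputable def gsMul {V : Type u} (E : V → V → Prop) : GS V → GS V → GS V
  | GS.vert a, GS.vert b => if E a b then GS.omega else GS.zero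
  | _, _ => GS.zero

-- The flat addition of the graph semiring: `a + b = a` if `a = b`, else `0`.
open Classical in
noncomputable def gsAdd {V : Type u} (a b : GS V) : GS V :=
  if a = b then a else GS.zero

-- `gsSum f n = f 0 + f 1 + ⋯ + f n` (a sum of `n + 1` terms).
noncomputable def gsSum {V : Type u} (f : ℕ → GS V) : ℕ → GS V
  | 0 => f 0
  | n + 1 => gsAdd (gsSum f n) (f (n + 1))

-- `E` is a graph (in the sense of the paper): a directed graph with no isolated
-- vertices in which every vertex has out-degree at most 1 and in-degree at most 1.
def IsGraph {V : Type u} (E : V → V → Prop) : Prop :=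
  (∀ v : V, ∃ u : V, E v u ∨ E u v) ∧
  (∀ v a b : V, E v a → E v b → a = b) ∧
  (∀ v a b : V, E a v → E b v → a = b)

-- `v 0, v 1, …, v (m - 1)` is a path of the graph `E` with `m` vertices.
def IsPathOn {V : Type u} (E : V → V → Prop) (m : ℕ) (v : ℕ → V) : Prop :=
  (∀ i < m, ∀ j < m, v i = v j → i = j) ∧
  (∀ i : ℕ, i + 1 < m → E (v i) (v (i + 1)))

-- `v 0, v 1, …, v (m - 1)` is a cycle of the graph `E` of length `m`.
def IsCycleOn {V : Type u} (E : V → V → Prop) (m : ℕ) (v : ℕ → V) : Prop :=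
  1 ≤ m ∧
  (∀ i < m, ∀ j < m, v i = v j → i = j) ∧
  (∀ i : ℕ, i + 1 < m → E (v i) (v (i + 1))) ∧
  E (v (m - 1)) (v 0)

-- The graph semiring of `E` satisfies the identity `c_n ≈ x³`: for all
-- `x, x_1, …, x_n` one has `x_1x_2 + x_2x_3 + ⋯ + x_{n-1}x_n + x_nx_1 = x·x·x`.
def satCx3 {V : Type u} (E : V → V → Prop) (n : ℕ) : Prop :=
  ∀ (x : GS V) (g : ℕ → GS V),
    gsSum (fun i => gsMul E (g i) (g ((i + 1) % n))) (n - 1) =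
      gsMul E (gsMul E x x) x

lemma gsMul_notvert {V : Type u} (E : V → V → Prop) (a b : GS V) :
    gsMul E a b = GS.zero ∨ gsMul E a b = GS.omega := by
  cases a <;> cases b <;> simp [gsMul]
  exact (em _).symm

lemma x3_zero {V : Type u} (E : V → V → Prop) (x : GS V) :
    gsMul E (gsMul E x x) x = GS.zero := by
  rcases gsMul_notvert E x x with h | h <;> rw [h] <;> cases x <;> simp [gsMul]

lemma gsSum_cases {V : Type u} (f : ℕ → GS V) (k : ℕ)
    (hf : ∀ i ≤ k, f i = GS.zero ∨ f i = GS.omega) :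
    gsSum f k = GS.zero ∨ (gsSum f k = GS.omega ∧ ∀ i ≤ k, f i = GS.omega) := by
  induction k with
  | zero =>
    rcases hf 0 le_rfl with h | h
    · left; exact h
    · right; exact ⟨h, fun i hi => by interval_cases i; exact h⟩
  | succ k ih =>
    have hf' : ∀ i ≤ k, f i = GS.zero ∨ f i = GS.omega :=
      fun i hi => hf i (hi.trans (Nat.le_succ k))
    rcases ih hf' with h | ⟨h, hall⟩
    · left
      show gsAdd (gsSum f k) (f (k + 1)) = GS.zero
      rw [h]; rcases hf (k + 1) le_rfl with h' | h' <;> rw [h'] <;> simp [gsAdd]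
    · rcases hf (k + 1) le_rfl with h' | h'
      · left
        show gsAdd (gsSum f k) (f (k + 1)) = GS.zero
        rw [h, h']; simp [gsAdd]
      · right
        constructor
        · show gsAdd (gsSum f k) (f (k + 1)) = GS.omega
          rw [h, h']; simp [gsAdd]
        · intro i hi
          by_cases hik : i ≤ k
          · exact hall i hik
          · have : i = k + 1 := by omega
            rw [this]; exact h'

lemma walk_to_cycle {V : Type u} (E : V → V → Prop) (hG : IsGraph E)
    (n : ℕ) (hn : 1 ≤ n) (g : ℕ → V)
    (hw : ∀ i < n, E (g i) (g ((i + 1) % n))) :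
    ∃ (m : ℕ) (v : ℕ → V), IsCycleOn E m v ∧ m ∣ n := by
  set u : ℕ → V := fun i => g (i % n) with hu
  have hE : ∀ i, E (u i) (u (i + 1)) := by
    intro i
    have h1 : (i + 1) % n = (i % n + 1) % n := by
      conv_lhs => rw [Nat.add_mod]
      rw [Nat.add_mod (i % n) 1 n, Nat.mod_mod_of_dvd i dvd_rfl]
    have := hw (i % n) (Nat.mod_lt i (by omega))
    rw [← h1] at this
    simpa [hu] using this
  have hdet : ∀ i j, u i = u j → u (i + 1) = u (j + 1) := by
    intro i j h
    exact hG.2.1 (u i) _ _ (hE i) (h ▸ hE j)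
  have hshift : ∀ k i j, u i = u j → u (i + k) = u (j + k) := by
    intro k
    induction k with
    | zero => intro i j h; simpa using h
    | succ k ih => intro i j h
                   exact hdet (i + k) (j + k) (ih i j h)
  have hn0 : u n = u 0 := by
    show g (n % n) = g (0 % n)
    rw [Nat.mod_self, Nat.zero_mod]
  have hex : ∃ k, 0 < k ∧ u k = u 0 := ⟨n, hn, hn0⟩
  classical
  set m := Nat.find hex with hm
  obtain ⟨hmpos, hm0⟩ := Nat.find_spec hex
  have hmin : ∀ k < m, ¬(0 < k ∧ u k = u 0) := fun k hk => Nat.find_min hex hk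
  -- periodicity
  have hper : ∀ i, u (i + m) = u i := by
    intro i
    have := hshift i m 0 hm0
    simpa [Nat.add_comm] using this
  have hmul : ∀ q r, u (r + q * m) = u r := by
    intro q
    induction q with
    | zero => intro r; simp
    | succ q ih =>
      intro r
      have : r + (q + 1) * m = (r + q * m) + m := by ring
      rw [this, hper, ih]
  -- m divides n
  have hdvd : m ∣ n := by
    have h1 : u (n % m + (n / m) * m) = u (n % m) := hmul _ _
    rw [Nat.mod_add_div'] at h1
    have h2 : u (n % m) = u 0 := h1.symm.trans hn0
    by_contra hnd
    have hr : 0 < n % m := Nat.pos_of_ne_zero (fun h => hnd (Nat.dvd_of_mod_eq_zero h))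
    exact hmin (n % m) (Nat.mod_lt n hmpos) ⟨hr, h2⟩
  refine ⟨m, u, ⟨hmpos, ?_, fun i _ => hE i, ?_⟩, hdvd⟩
  · -- injectivity
    have key : ∀ i j, i < j → j < m → u i = u j → False := by
      intro i j hij hjm h
      have := hshift (m - j) i j h
      rw [show j + (m - j) = m by omega, hm0] at this
      exact hmin (i + (m - j)) (by omega) ⟨by omega, this⟩
    intro i hi j hj h
    rcases lt_trichotomy i j with h' | h' | h'
    · exact absurd h (fun h => key i j h' hj h)
    · exact h'
    · exact absurd h.symm (fun h => key j i h' hi h)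
  · -- wrap-around edge
    have := hE (m - 1)
    rw [show m - 1 + 1 = m by omega, hm0] at this
    exact this

lemma gsSum_all_omega {V : Type u} (f : ℕ → GS V) (k : ℕ)
    (h : ∀ i ≤ k, f i = GS.omega) : gsSum f k = GS.omega := by
  induction k with
  | zero => exact h 0 le_rfl
  | succ k ih =>
    show gsAdd (gsSum f k) (f (k + 1)) = GS.omega
    rw [ih (fun i hi => h i (hi.trans (Nat.le_succ k))), h (k + 1) le_rfl]
    simp [gsAdd]

/-- For `n ≥ 1`, the graph semiring of a graph `E` satisfies `c_n ≈ x³`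
iff the graph contains no cycle whose length divides `n`. -/
theorem stmt_13 {V : Type u} (E : V → V → Prop) (hG : IsGraph E)
    (n : ℕ) (hn : 1 ≤ n) :
    satCx3 E n ↔ ¬ ∃ (m : ℕ) (v : ℕ → V), IsCycleOn E m v ∧ m ∣ n := by
  classical
  constructor
  · rintro hs ⟨m, v, ⟨hm1, hinj, hpath, hwrap⟩, hdvd⟩
    have hmpos : 0 < m := hm1
    have key : ∀ a < m, E (v a) (v ((a + 1) % m)) := by
      intro a ha
      rcases eq_or_lt_of_le (Nat.succ_le_of_lt ha) with h | h
      · rw [show (a + 1) % m = 0 from by rw [show a + 1 = m from h, Nat.mod_self],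
          show a = m - 1 from by omega]
        exact hwrap
      · rw [Nat.mod_eq_of_lt h]; exact hpath a h
    set g : ℕ → GS V := fun i => GS.vert (v (i % m)) with hg
    have hterm : ∀ i ≤ n - 1, gsMul E (g i) (g ((i + 1) % n)) = GS.omega := by
      intro i _
      have h1 : (i + 1) % n % m = (i + 1) % m := Nat.mod_mod_of_dvd _ hdvd
      have hkey := key (i % m) (Nat.mod_lt i hmpos)
      rw [Nat.mod_add_mod i m 1] at hkey
      show gsMul E (GS.vert (v (i % m))) (GS.vert (v ((i + 1) % n % m))) = GS.omega
      rw [h1]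
      simp [gsMul, hkey]
    have hsum : gsSum (fun i => gsMul E (g i) (g ((i + 1) % n))) (n - 1) = GS.omega :=
      gsSum_all_omega _ _ hterm
    have h0 := hs GS.zero g
    rw [x3_zero, hsum] at h0
    exact nomatch h0
  · intro hnc x g
    rw [x3_zero]
    rcases gsSum_cases (fun i => gsMul E (g i) (g ((i + 1) % n))) (n - 1)
        (fun i _ => gsMul_notvert E (g i) (g ((i + 1) % n))) with h | ⟨hω, hall⟩
    · exact h
    · exfalso
      have hv : ∀ i < n, ∃ a, g i = GS.vert a := by
        intro i hi
        have hti := hall i (by omega)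
        cases hgi : g i with
        | zero => rw [hgi] at hti; cases g ((i + 1) % n) <;> simp [gsMul] at hti
        | omega => rw [hgi] at hti; cases g ((i + 1) % n) <;> simp [gsMul] at hti
        | vert a => exact ⟨a, rfl⟩
      obtain ⟨a0, _⟩ := hv 0 (by omega)
      have hv' : ∀ i, ∃ a, i < n → g i = GS.vert a := by
        intro i
        by_cases hi : i < n
        · obtain ⟨a, ha⟩ := hv i hi; exact ⟨a, fun _ => ha⟩
        · exact ⟨a0, fun h => absurd h hi⟩
      choose w hwspec using hv'
      apply hnc
      apply walk_to_cycle E hG n hn w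
      intro i hi
      have hterm := hall i (by omega)
      rw [hwspec i hi, hwspec ((i + 1) % n) (Nat.mod_lt _ (by omega))] at hterm
      by_contra hne
      simp [gsMul, hne] at hterm
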